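/- For every real ε with 0 < ε ≤ 1, there exist positive integers n and k and agents x : Fin n → ℝ on the real line such that no k-clustering Y : Fin k → ℝ is a (2 − ε, 1)-core clustering; that is, for every Y : Fin k → ℝ there exist a set S ⊆ Fin n with |S| ≥ (2 − ε)·n/k and a point y' ∈ ℝ with Σ_{i∈S} |x_i − y'| < Σ_{i∈S} min_{j<k} |x_i − Y_j|. -/

import Mathlib

/-- The cost of agent location `p` under the `k`-clustering `Y`:
the minimum distance from `p` to a center of `Y`. -/
noncomputable def clusterCost {X : Type*} [MetricSpace X] {k : ℕ} (Y : Fin k → X) (p : X) : ℝ :=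
  sInf (Set.range fun j => dist p (Y j))

lemma clusterCost_le {k : ℕ} (Y : Fin k → ℝ) (p : ℝ) (j : Fin k) :
    clusterCost Y p ≤ dist p (Y j) :=
  csInf_le (Set.finite_range _).bddBelow ⟨j, rfl⟩

lemma clusterCost_attained {k : ℕ} (hk : 0 < k) (Y : Fin k → ℝ) (p : ℝ) :
    ∃ j, clusterCost Y p = dist p (Y j) := by
  have hne : (Set.range fun j => dist p (Y j)).Nonempty := ⟨_, ⟨⟨0, hk⟩, rfl⟩⟩
  obtain ⟨j, hj⟩ := hne.csInf_mem (Set.finite_range _)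
  exact ⟨j, hj.symm⟩

lemma clusterCost_nonneg {k : ℕ} (hk : 0 < k) (Y : Fin k → ℝ) (p : ℝ) :
    0 ≤ clusterCost Y p := by
  obtain ⟨j, hj⟩ := clusterCost_attained hk Y p
  rw [hj]; exact dist_nonneg

/-- position of the `b`-side of pair `j` -/
def pos (j : ℕ) (b : Bool) : ℝ := 10 * j + (if b then 2 else 0)

lemma exists_expensive (m : ℕ) (hm : 1 ≤ m) (Y : Fin (2*m - 1) → ℝ) :
    ∃ j : ℕ, j < m ∧ 2 ≤ clusterCost Y (10 * (j:ℝ)) + clusterCost Y (10 * (j:ℝ) + 2) := by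
  by_contra hcon
  push_neg at hcon
  have hk : 0 < 2*m - 1 := by omega
  have key : ∀ P : Fin m × Bool, ∃ c : Fin (2*m-1),
      dist (pos P.1 P.2) (Y c) = clusterCost Y (pos P.1 P.2) := by
    intro P
    obtain ⟨c, hc⟩ := clusterCost_attained hk Y (pos P.1 P.2)
    exact ⟨c, hc.symm⟩
  choose g hg using key
  have hcheap : ∀ P : Fin m × Bool, dist (pos P.1 P.2) (Y (g P)) < 2 := by
    rintro ⟨j, b⟩
    have hj := hcon j j.2
    have ha := clusterCost_nonneg hk Y (10 * (j:ℝ))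
    have hb := clusterCost_nonneg hk Y (10 * (j:ℝ) + 2)
    have h := hg ⟨j, b⟩
    cases b <;> simp only [pos, if_true, if_false, Bool.false_eq_true, add_zero] at h ⊢ <;>
      rw [h] <;> linarith
  have hinj : Function.Injective g := by
    rintro ⟨j, b⟩ ⟨j', b'⟩ hPQ
    have h1 := hcheap ⟨j, b⟩
    have h2 := hcheap ⟨j', b'⟩
    rw [hPQ] at h1
    have htri : dist (pos j b) (pos j' b') < 4 := by
      calc dist (pos j b) (pos j' b') ≤ dist (pos j b) (Y (g ⟨j', b'⟩)) + dist (pos j' b') (Y (g ⟨j', b'⟩)) := dist_triangle_right _ _ _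
        _ < 4 := by linarith
    by_cases hjj : j = j'
    · subst hjj
      by_cases hbb : b = b'
      · subst hbb; rfl
      · exfalso
        have hj := hcon j j.2
        have hd : dist (pos j b) (pos j b') = 2 := by
          rcases b <;> rcases b' <;> simp_all [pos, Real.dist_eq] <;> norm_num [abs_of_nonpos, abs_of_nonneg]
        have e1 := hg ⟨j, b⟩
        have e2 := hg ⟨j, b'⟩
        rw [hPQ] at e1
        have : dist (pos j b) (pos j b') ≤ dist (pos j b) (Y (g ⟨j, b'⟩)) + dist (pos j b') (Y (g ⟨j, b'⟩)) := dist_triangle_right _ _ _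
        rw [e1, e2] at this
        have hsum : clusterCost Y (pos j b) + clusterCost Y (pos j b') < 2 := by
          rcases b <;> rcases b' <;> simp_all [pos] <;> linarith [hcon j j.2]
        linarith [hd ▸ this]
    · exfalso
      have hjd : (j : Fin m) ≠ j' := hjj
      have hge : (8:ℝ) ≤ dist (pos j b) (pos j' b') := by
        have hne : ((j:ℕ) : ℝ) + 1 ≤ ((j':ℕ) : ℝ) ∨ ((j':ℕ) : ℝ) + 1 ≤ ((j:ℕ) : ℝ) := by
          have : (j:ℕ) ≠ (j':ℕ) := fun h => hjd (Fin.ext h)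
          rcases Nat.lt_or_ge (j:ℕ) (j':ℕ) with h | h
          · left; exact_mod_cast h
          · right; exact_mod_cast lt_of_le_of_ne h (Ne.symm this)
        rw [pos, pos, Real.dist_eq, le_abs]
        rcases hne with h | h <;> [right; left] <;> rcases b <;> rcases b' <;> simp <;> linarith
      linarith
  have := Fintype.card_le_of_injective g hinj
  simp [Fintype.card_prod] at this
  omega

lemma sum_ite_fin (s c : ℕ) (hcs : c ≤ s) (u v : ℝ) :
    ∑ r : Fin s, (if (r:ℕ) < c then u else v) = c * u + ((s - c : ℕ) : ℝ) * v := by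
  rw [Fin.sum_univ_eq_sum_range (fun r => if r < c then u else v) s]
  rw [Finset.range_eq_Ico, ← Finset.sum_Ico_consecutive _ (Nat.zero_le c) hcs]
  have h1 : ∑ r ∈ Finset.Ico 0 c, (if r < c then u else v) = c * u := by
    rw [Finset.sum_congr rfl (fun r hr => if_pos (Finset.mem_Ico.mp hr).2)]
    simp [mul_comm]
  have h2 : ∑ r ∈ Finset.Ico c s, (if r < c then u else v) = ((s - c : ℕ) : ℝ) * v := by
    rw [Finset.sum_congr rfl (fun r hr => if_neg (by simpa using Nat.not_lt.mpr (Finset.mem_Ico.mp hr).1))]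
    simp [mul_comm]
  rw [h1, h2]

lemma coalition (m j d : ℕ) (hm : 2 ≤ m) (hj : j < m) (hd : d ≤ 1)
    (x : Fin (4*m^2) → ℝ)
    (hx : ∀ i : Fin (4*m^2), x i =
      10 * ((i.val / (4*m) : ℕ) : ℝ) + (if i.val % (4*m) < 2*m then 0 else 2)) :
    ∃ S : Finset (Fin (4*m^2)), S.card = 4*m - 1 ∧
      ∀ g : ℝ → ℝ,
        ∑ i ∈ S, g (x i)
          = ((2*m - d : ℕ) : ℝ) * g (10 * (j:ℝ)) + ((2*m - 1 + d : ℕ) : ℝ) * g (10 * (j:ℝ) + 2) := by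
  have h0 : 0 < 4*m := by omega
  have hbound : ∀ r : Fin (4*m - 1), 4*m*j + (d + r.val) < 4*m^2 := by
    intro r
    have h1 : d + r.val < 4*m := by have := r.isLt; omega
    calc 4*m*j + (d + r.val) < 4*m*j + 4*m := Nat.add_lt_add_left h1 _
      _ = 4*m*(j+1) := by ring
      _ ≤ 4*m*m := Nat.mul_le_mul_left _ hj
      _ = 4*m^2 := by ring
  set f : Fin (4*m - 1) → Fin (4*m^2) := fun r => ⟨4*m*j + (d + r.val), hbound r⟩ with hf
  have hinj : Function.Injective f := by
    intro r r' h
    have h2 : 4*m*j + (d + r.val) = 4*m*j + (d + r'.val) := congrArg Fin.val h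
    have := Nat.add_left_cancel h2
    exact Fin.ext (by omega)
  refine ⟨Finset.image f Finset.univ, ?_, ?_⟩
  · rw [Finset.card_image_of_injective _ hinj, Finset.card_univ, Fintype.card_fin]
  · intro g
    rw [Finset.sum_image (fun r _ r' _ h => hinj h)]
    have hval : ∀ r : Fin (4*m - 1),
        g (x (f r)) = (if (r:ℕ) < 2*m - d then g (10 * (j:ℝ)) else g (10 * (j:ℝ) + 2)) := by
      intro r
      have hdr : d + r.val < 4*m := by have := r.isLt; omega
      have hfv : (f r).val = 4*m*j + (d + r.val) := rfl
      rw [hx, hfv]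
      rw [Nat.mul_add_div h0, Nat.div_eq_of_lt hdr, Nat.add_zero,
          Nat.mul_add_mod, Nat.mod_eq_of_lt hdr]
      by_cases hcase : (r:ℕ) < 2*m - d
      · rw [if_pos hcase, if_pos (by omega), add_zero]
      · rw [if_neg hcase, if_neg (by omega)]
    rw [Finset.sum_congr rfl (fun r _ => hval r), sum_ite_fin _ _ (by omega)]
    have he : 4*m - 1 - (2*m - d) = 2*m - 1 + d := by omega
    rw [he]

theorem stmt11 (ε : ℝ) (hε0 : 0 < ε) (hε1 : ε ≤ 1) :
    ∃ (n k : ℕ), 0 < n ∧ 0 < k ∧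
      ∃ x : Fin n → ℝ,
        ∀ Y : Fin k → ℝ,
          ∃ S : Finset (Fin n), (2 - ε) * (n : ℝ) / (k : ℝ) ≤ S.card ∧
            ∃ y' : ℝ, ∑ i ∈ S, |x i - y'| < ∑ i ∈ S, clusterCost Y (x i) := by
  set m : ℕ := ⌈(2:ℝ)/ε⌉₊ with hmdef
  have hε : (2:ℝ)/ε ≤ (m : ℝ) := Nat.le_ceil _
  have hm2 : 2 ≤ m := by
    have h2 : (2:ℝ) ≤ 2/ε := by rw [le_div_iff₀ hε0]; linarith
    exact_mod_cast le_trans h2 hε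
  have hmr : (2:ℝ) ≤ (m:ℝ) := by exact_mod_cast hm2
  have hεm : (2:ℝ) ≤ ε * m := by
    rw [div_le_iff₀ hε0] at hε; linarith
  refine ⟨4*m^2, 2*m - 1, by positivity, by omega, ?_⟩
  refine ⟨fun i => 10 * ((i.val / (4*m) : ℕ) : ℝ) + (if i.val % (4*m) < 2*m then 0 else 2), ?_⟩
  intro Y
  obtain ⟨j, hjm, hab⟩ := exists_expensive m (by omega) Y
  set a := clusterCost Y (10 * (j:ℝ)) with hadef
  set b := clusterCost Y (10 * (j:ℝ) + 2) with hbdef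
  have hcast : ∀ c : ℕ, c ≤ 4*m → ((c : ℕ) : ℝ) = (c : ℝ) := fun c _ => rfl
  -- card bound, shared by both cases
  have hcard : (2 - ε) * ((4*m^2 : ℕ) : ℝ) / ((2*m - 1 : ℕ) : ℝ) ≤ ((4*m - 1 : ℕ) : ℝ) := by
    have e1 : ((2*m - 1 : ℕ) : ℝ) = 2*(m:ℝ) - 1 := by
      rw [Nat.cast_sub (by omega)]; push_cast; ring
    have e2 : ((4*m - 1 : ℕ) : ℝ) = 4*(m:ℝ) - 1 := by
      rw [Nat.cast_sub (by omega)]; push_cast; ring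
    have e3 : ((4*m^2 : ℕ) : ℝ) = 4*(m:ℝ)^2 := by push_cast; ring
    rw [e1, e2, e3, div_le_iff₀ (by linarith)]
    nlinarith [hεm, hmr, mul_le_mul_of_nonneg_right hεm (by linarith : (0:ℝ) ≤ (m:ℝ))]
  by_cases h1 : 2*(2*(m:ℝ) - 1) < 2*(m:ℝ)*a + (2*(m:ℝ)-1)*b
  · -- A-heavy coalition, d = 0, y' = 10*j
    obtain ⟨S, hScard, hSsum⟩ := coalition m j 0 hm2 hjm (by omega) _ (fun i => rfl)
    refine ⟨S, ?_, 10*(j:ℝ), ?_⟩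
    · rw [hScard]; exact hcard
    · have eL := hSsum (fun p => |p - 10*(j:ℝ)|)
      have eR := hSsum (clusterCost Y)
      rw [eL, eR, ← hadef, ← hbdef]
      have c1 : ((2*m - 0 : ℕ) : ℝ) = 2*(m:ℝ) := by
        rw [Nat.sub_zero]; push_cast; ring
      have c2 : ((2*m - 1 + 0 : ℕ) : ℝ) = 2*(m:ℝ) - 1 := by
        rw [Nat.add_zero, Nat.cast_sub (by omega)]; push_cast; ring
      rw [c1, c2]
      have d1 : |10*(j:ℝ) - 10*(j:ℝ)| = 0 := by simp
      have d2 : |10*(j:ℝ) + 2 - 10*(j:ℝ)| = 2 := by norm_num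
      rw [d1, d2]
      linarith
  · -- B-heavy coalition, d = 1, y' = 10*j + 2
    obtain ⟨S, hScard, hSsum⟩ := coalition m j 1 hm2 hjm (by omega) _ (fun i => rfl)
    refine ⟨S, ?_, 10*(j:ℝ) + 2, ?_⟩
    · rw [hScard]; exact hcard
    · have eL := hSsum (fun p => |p - (10*(j:ℝ) + 2)|)
      have eR := hSsum (clusterCost Y)
      rw [eL, eR, ← hadef, ← hbdef]
      have c1 : ((2*m - 1 : ℕ) : ℝ) = 2*(m:ℝ) - 1 := by
        rw [Nat.cast_sub (by omega)]; push_cast; ring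
      have c2 : ((2*m - 1 + 1 : ℕ) : ℝ) = 2*(m:ℝ) := by
        rw [Nat.sub_add_cancel (by omega)]; push_cast; ring
      rw [c1, c2]
      have d1 : |10*(j:ℝ) - (10*(j:ℝ) + 2)| = 2 := by
        rw [show 10*(j:ℝ) - (10*(j:ℝ) + 2) = -2 by ring]; norm_num
      have d2 : |10*(j:ℝ) + 2 - (10*(j:ℝ) + 2)| = 0 := by simp
      rw [d1, d2]
      push_neg at h1
      nlinarith [hab, mul_nonneg (by linarith : (0:ℝ) ≤ a + b - 2) (by linarith : (0:ℝ) ≤ 4*(m:ℝ) - 1)]
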